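/- For finite information structures u, v on K × C × D with |C|, |D| ≤ L, sup over payoff functions g with action sets of cardinality ≤ L of (val(v,g) - val(u,g)) equals min over garblings q₁ : C → Δ(C), q₂ : D → Δ(D) of ‖q₁.u - v.q₂‖₁, where (q₁.u)(k,c,d) = Σ_{c'} u(k,c',d) q₁(c|c') and (v.q₂)(k,c,d) = Σ_{d'} v(k,c,d') q₂(d|d'). -/

import Mathlib

open scoped BigOperators

noncomputable section

/-- A probability distribution on a finite type, given as a nonnegative function summing to 1. -/
def IsDist {α : Type*} [Fintype α] (u : α → ℝ) : Prop :=
  (∀ a, 0 ≤ u a) ∧ ∑ a, u a = 1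

/-- A garbling (stochastic map / behavioral strategy). -/
def IsKernel {α β : Type*} [Fintype β] (q : α → β → ℝ) : Prop :=
  ∀ a, IsDist (q a)

/-- Expected payoff in the zero-sum Bayesian game `Γ(u,g)` when players use
behavioral strategies `σ` and `τ`. -/
def pay {K C D I J : Type*} [Fintype K] [Fintype C] [Fintype D] [Fintype I] [Fintype J]
    (u : K × C × D → ℝ) (g : K → I → J → ℝ) (σ : C → I → ℝ) (τ : D → J → ℝ) : ℝ :=
  ∑ k, ∑ c, ∑ d, ∑ i, ∑ j, u (k, c, d) * σ c i * τ d j * g k i j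

/-- The value (maxmin) of the zero-sum Bayesian game `Γ(u,g)`, player 1 maximizing. -/
def gameVal {K C D I J : Type*} [Fintype K] [Fintype C] [Fintype D] [Fintype I] [Fintype J]
    (u : K × C × D → ℝ) (g : K → I → J → ℝ) : ℝ :=
  sSup {x : ℝ | ∃ σ : C → I → ℝ, IsKernel σ ∧
    x = sInf {y : ℝ | ∃ τ : D → J → ℝ, IsKernel τ ∧ y = pay u g σ τ}}

/-- Garbling of player 1's signal: `(q.u)(k,c,d) = ∑ c', u(k,c',d) q(c|c')`. -/
def garbleL {K C C' D : Type*} [Fintype C] (q : C → C' → ℝ) (u : K × C × D → ℝ) :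
    K × C' × D → ℝ :=
  fun x => ∑ c, u (x.1, c, x.2.2) * q c x.2.1

/-- Garbling of player 2's signal: `(u.q)(k,c,d) = ∑ d', u(k,c,d') q(d|d')`. -/
def garbleR {K C D D' : Type*} [Fintype D] (q : D → D' → ℝ) (u : K × C × D → ℝ) :
    K × C × D' → ℝ :=
  fun x => ∑ d, u (x.1, x.2.1, d) * q d x.2.2

/-- ℓ¹ distance. -/
def l1 {α : Type*} [Fintype α] (u v : α → ℝ) : ℝ := ∑ a, |u a - v a|

/-- Payoff functions bounded by 1. -/
def Bounded1 {K I J : Type*} (g : K → I → J → ℝ) : Prop := ∀ k i j, |g k i j| ≤ 1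

/-- The value-based distance: sup over all finite zero-sum games (with nonempty
finite action sets, payoffs bounded by 1) of the absolute difference of values. -/
def valueDist {K C D C' D' : Type*} [Fintype K] [Fintype C] [Fintype D] [Fintype C'] [Fintype D']
    (u : K × C × D → ℝ) (v : K × C' × D' → ℝ) : ℝ :=
  sSup {x : ℝ | ∃ (m n : ℕ) (g : K → Fin (m + 1) → Fin (n + 1) → ℝ),
    Bounded1 g ∧ x = |gameVal u g - gameVal v g|}

/-- Value of a single-agent decision problem on a single-agent information structure. -/
def val1 {K C I : Type*} [Fintype K] [Fintype C] [Fintype I] [Nonempty I]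
    (u : K × C → ℝ) (g : K → I → ℝ) : ℝ :=
  ∑ c, ⨆ i, ∑ k, u (k, c) * g k i

/-- The single-agent value-based distance. -/
def valueDist1 {K C C' : Type*} [Fintype K] [Fintype C] [Fintype C']
    (u : K × C → ℝ) (v : K × C' → ℝ) : ℝ :=
  sSup {x : ℝ | ∃ (m : ℕ) (g : K → Fin (m + 1) → ℝ),
    (∀ k i, |g k i| ≤ 1) ∧ x = |val1 u g - val1 v g|}

/-- Garbling of the signal in a single-agent structure. -/
def garble1 {K C C' : Type*} [Fintype C] (q : C → C' → ℝ) (u : K × C → ℝ) : K × C' → ℝ :=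
  fun x => ∑ c, u (x.1, c) * q c x.2

end

section GPAux

open Classical in
/-- pure (deterministic) kernel -/
noncomputable def pureK {α β : Type*} [Fintype β] (f : α → β) : α → β → ℝ :=
  fun a b => if b = f a then 1 else 0

lemma isKernel_pureK {α β : Type*} [Fintype β] (f : α → β) : IsKernel (pureK f) := by
  classical
  intro a
  refine ⟨fun b => ?_, ?_⟩
  · unfold pureK; split <;> norm_num
  · simp [pureK]

variable {K C D C' D' I J : Type*} [Fintype K] [Fintype C] [Fintype D] [Fintype C'] [Fintype D']
  [Fintype I] [Fintype J]

lemma sum_mul_le_of_le {p a : I → ℝ} {B : ℝ}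
    (hp : ∀ i, 0 ≤ p i) (hs : ∑ i, p i = 1) (hB : ∀ i, a i ≤ B) :
    ∑ i, p i * a i ≤ B := by
  calc ∑ i, p i * a i ≤ ∑ i, p i * B :=
        Finset.sum_le_sum fun i _ => mul_le_mul_of_nonneg_left (hB i) (hp i)
    _ = B := by rw [← Finset.sum_mul, hs, one_mul]

lemma le_sum_mul_of_le {p a : I → ℝ} {B : ℝ}
    (hp : ∀ i, 0 ≤ p i) (hs : ∑ i, p i = 1) (hB : ∀ i, B ≤ a i) :
    B ≤ ∑ i, p i * a i := by
  calc B = ∑ i, p i * B := by rw [← Finset.sum_mul, hs, one_mul]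
    _ ≤ ∑ i, p i * a i :=
        Finset.sum_le_sum fun i _ => mul_le_mul_of_nonneg_left (hB i) (hp i)

lemma abs_sum_mul_le {p a : I → ℝ} {B : ℝ}
    (hp : ∀ i, 0 ≤ p i) (hs : ∑ i, p i = 1) (hB : ∀ i, |a i| ≤ B) :
    |∑ i, p i * a i| ≤ B := by
  calc |∑ i, p i * a i| ≤ ∑ i, |p i * a i| := Finset.abs_sum_le_sum_abs _ _
    _ = ∑ i, p i * |a i| := by
        refine Finset.sum_congr rfl fun i _ => ?_
        rw [abs_mul, abs_of_nonneg (hp i)]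
    _ ≤ B := sum_mul_le_of_le hp hs hB

lemma isKernel_comp {α : Type*} {β : Type*} [Fintype β] {q : α → β → ℝ} {σ : β → I → ℝ}
    (hq : IsKernel q) (hσ : IsKernel σ) :
    IsKernel (fun a i => ∑ b, q a b * σ b i) := by
  intro a
  refine ⟨fun i => Finset.sum_nonneg fun b _ => mul_nonneg ((hq a).1 b) ((hσ b).1 i), ?_⟩
  rw [Finset.sum_comm]
  calc ∑ b, ∑ i, q a b * σ b i = ∑ b, q a b * ∑ i, σ b i := by
        simp [Finset.mul_sum]
    _ = 1 := by
        have : ∀ b, ∑ i, σ b i = 1 := fun b => (hσ b).2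
        simp only [this, mul_one]
        exact (hq a).2

/-- player-1 view of the payoff -/
lemma payB (u : K × C × D → ℝ) (g : K → I → J → ℝ) (σ : C → I → ℝ) (τ : D → J → ℝ) :
    pay u g σ τ = ∑ c, ∑ i, σ c i * (∑ k, ∑ d, ∑ j, u (k, c, d) * τ d j * g k i j) := by
  have h1 : pay u g σ τ = ∑ x : K × C × D × I × J,
      u (x.1, x.2.1, x.2.2.1) * σ x.2.1 x.2.2.2.1 * τ x.2.2.1 x.2.2.2.2
        * g x.1 x.2.2.2.1 x.2.2.2.2 := by
    simp [pay, Fintype.sum_prod_type]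
  have h2 : (∑ c, ∑ i, σ c i * (∑ k, ∑ d, ∑ j, u (k, c, d) * τ d j * g k i j))
      = ∑ y : C × I × K × D × J,
        σ y.1 y.2.1 * (u (y.2.2.1, y.1, y.2.2.2.1) * τ y.2.2.2.1 y.2.2.2.2
          * g y.2.2.1 y.2.1 y.2.2.2.2) := by
    simp [Fintype.sum_prod_type, Finset.mul_sum]
  rw [h1, h2]
  exact Fintype.sum_equiv
    ⟨fun x => (x.2.1, x.2.2.2.1, x.1, x.2.2.1, x.2.2.2.2),
     fun y => (y.2.2.1, y.1, y.2.2.2.1, y.2.1, y.2.2.2.2),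
     fun _ => rfl, fun _ => rfl⟩ _ _ (fun x => by simp only [Equiv.coe_fn_mk]; ring)

lemma payA (u : K × C × D → ℝ) (g : K → I → J → ℝ) (σ : C → I → ℝ) (τ : D → J → ℝ) :
    pay u g σ τ = ∑ d, ∑ j, τ d j * (∑ k, ∑ c, ∑ i, u (k, c, d) * σ c i * g k i j) := by
  have h1 : pay u g σ τ = ∑ x : K × C × D × I × J,
      u (x.1, x.2.1, x.2.2.1) * σ x.2.1 x.2.2.2.1 * τ x.2.2.1 x.2.2.2.2
        * g x.1 x.2.2.2.1 x.2.2.2.2 := by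
    simp [pay, Fintype.sum_prod_type]
  have h2 : (∑ d, ∑ j, τ d j * (∑ k, ∑ c, ∑ i, u (k, c, d) * σ c i * g k i j))
      = ∑ y : D × J × K × C × I,
        τ y.1 y.2.1 * (u (y.2.2.1, y.2.2.2.1, y.1) * σ y.2.2.2.1 y.2.2.2.2
          * g y.2.2.1 y.2.2.2.2 y.2.1) := by
    simp [Fintype.sum_prod_type, Finset.mul_sum]
  rw [h1, h2]
  exact Fintype.sum_equiv
    ⟨fun x => (x.2.2.1, x.2.2.2.2, x.1, x.2.1, x.2.2.2.1),
     fun y => (y.2.2.1, y.2.2.2.1, y.1, y.2.2.2.2, y.2.1),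
     fun _ => rfl, fun _ => rfl⟩ _ _ (fun x => by simp only [Equiv.coe_fn_mk]; ring)

lemma pay_garbleL (q : C → C' → ℝ) (u : K × C × D → ℝ) (g : K → I → J → ℝ)
    (σ : C' → I → ℝ) (τ : D → J → ℝ) :
    pay (garbleL q u) g σ τ = pay u g (fun c i => ∑ c', q c c' * σ c' i) τ := by
  have h1 : pay (garbleL q u) g σ τ = ∑ x : K × C' × D × I × J × C,
      u (x.1, x.2.2.2.2.2, x.2.2.1) * q x.2.2.2.2.2 x.2.1 * σ x.2.1 x.2.2.2.1
        * τ x.2.2.1 x.2.2.2.2.1 * g x.1 x.2.2.2.1 x.2.2.2.2.1 := by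
    simp [pay, garbleL, Fintype.sum_prod_type, Finset.sum_mul]
  have h2 : pay u g (fun c i => ∑ c', q c c' * σ c' i) τ = ∑ y : K × C × D × I × J × C',
      u (y.1, y.2.1, y.2.2.1) * (q y.2.1 y.2.2.2.2.2 * σ y.2.2.2.2.2 y.2.2.2.1)
        * τ y.2.2.1 y.2.2.2.2.1 * g y.1 y.2.2.2.1 y.2.2.2.2.1 := by
    simp [pay, Fintype.sum_prod_type, Finset.sum_mul, Finset.mul_sum]
  rw [h1, h2]
  exact Fintype.sum_equiv
    ⟨fun x => (x.1, x.2.2.2.2.2, x.2.2.1, x.2.2.2.1, x.2.2.2.2.1, x.2.1),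
     fun y => (y.1, y.2.2.2.2.2, y.2.2.1, y.2.2.2.1, y.2.2.2.2.1, y.2.1),
     fun _ => rfl, fun _ => rfl⟩ _ _ (fun x => by simp only [Equiv.coe_fn_mk]; ring)

lemma pay_garbleR (q : D → D' → ℝ) (v : K × C × D → ℝ) (g : K → I → J → ℝ)
    (σ : C → I → ℝ) (τ : D' → J → ℝ) :
    pay (garbleR q v) g σ τ = pay v g σ (fun d j => ∑ d', q d d' * τ d' j) := by
  have h1 : pay (garbleR q v) g σ τ = ∑ x : K × C × D' × I × J × D,
      v (x.1, x.2.1, x.2.2.2.2.2) * q x.2.2.2.2.2 x.2.2.1 * σ x.2.1 x.2.2.2.1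
        * τ x.2.2.1 x.2.2.2.2.1 * g x.1 x.2.2.2.1 x.2.2.2.2.1 := by
    simp [pay, garbleR, Fintype.sum_prod_type, Finset.sum_mul]
  have h2 : pay v g σ (fun d j => ∑ d', q d d' * τ d' j) = ∑ y : K × C × D × I × J × D',
      v (y.1, y.2.1, y.2.2.1) * σ y.2.1 y.2.2.2.1
        * (q y.2.2.1 y.2.2.2.2.2 * τ y.2.2.2.2.2 y.2.2.2.2.1) * g y.1 y.2.2.2.1 y.2.2.2.2.1 := by
    simp [pay, Fintype.sum_prod_type, Finset.sum_mul, Finset.mul_sum]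
  rw [h1, h2]
  exact Fintype.sum_equiv
    ⟨fun x => (x.1, x.2.1, x.2.2.2.2.2, x.2.2.2.1, x.2.2.2.2.1, x.2.2.1),
     fun y => (y.1, y.2.1, y.2.2.2.2.2, y.2.2.2.1, y.2.2.2.2.1, y.2.2.1),
     fun _ => rfl, fun _ => rfl⟩ _ _ (fun x => by simp only [Equiv.coe_fn_mk]; ring)

lemma pay_sub (u w : K × C × D → ℝ) (g : K → I → J → ℝ) (σ : C → I → ℝ) (τ : D → J → ℝ) :
    pay (fun s => u s - w s) g σ τ = pay u g σ τ - pay w g σ τ := by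
  simp [pay, sub_mul, Finset.sum_sub_distrib]

lemma ip_garbleL (φ : K × C' × D → ℝ) (q : C → C' → ℝ) (u : K × C × D → ℝ) :
    ∑ s : K × C' × D, φ s * garbleL q u s
      = ∑ c, ∑ c', (∑ k, ∑ d, u (k, c, d) * φ (k, c', d)) * q c c' := by
  have h1 : ∑ s : K × C' × D, φ s * garbleL q u s = ∑ x : K × C' × D × C,
      φ (x.1, x.2.1, x.2.2.1) * (u (x.1, x.2.2.2, x.2.2.1) * q x.2.2.2 x.2.1) := by
    simp [garbleL, Fintype.sum_prod_type, Finset.mul_sum]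
  have h2 : (∑ c, ∑ c', (∑ k, ∑ d, u (k, c, d) * φ (k, c', d)) * q c c')
      = ∑ y : C × C' × K × D,
        u (y.2.2.1, y.1, y.2.2.2) * φ (y.2.2.1, y.2.1, y.2.2.2) * q y.1 y.2.1 := by
    simp [Fintype.sum_prod_type, Finset.sum_mul]
  rw [h1, h2]
  exact Fintype.sum_equiv
    ⟨fun x => (x.2.2.2, x.2.1, x.1, x.2.2.1), fun y => (y.2.2.1, y.2.1, y.2.2.2, y.1),
     fun _ => rfl, fun _ => rfl⟩ _ _ (fun x => by simp only [Equiv.coe_fn_mk]; ring)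

lemma ip_garbleR (φ : K × C × D' → ℝ) (q : D → D' → ℝ) (v : K × C × D → ℝ) :
    ∑ s : K × C × D', φ s * garbleR q v s
      = ∑ d, ∑ d', (∑ k, ∑ c, v (k, c, d) * φ (k, c, d')) * q d d' := by
  have h1 : ∑ s : K × C × D', φ s * garbleR q v s = ∑ x : K × C × D' × D,
      φ (x.1, x.2.1, x.2.2.1) * (v (x.1, x.2.1, x.2.2.2) * q x.2.2.2 x.2.2.1) := by
    simp [garbleR, Fintype.sum_prod_type, Finset.mul_sum]
  have h2 : (∑ d, ∑ d', (∑ k, ∑ c, v (k, c, d) * φ (k, c, d')) * q d d')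
      = ∑ y : D × D' × K × C,
        v (y.2.2.1, y.2.2.2, y.1) * φ (y.2.2.1, y.2.2.2, y.2.1) * q y.1 y.2.1 := by
    simp [Fintype.sum_prod_type, Finset.sum_mul]
  rw [h1, h2]
  exact Fintype.sum_equiv
    ⟨fun x => (x.2.2.2, x.2.2.1, x.1, x.2.1), fun y => (y.2.2.1, y.2.2.2, y.2.1, y.1),
     fun _ => rfl, fun _ => rfl⟩ _ _ (fun x => by simp only [Equiv.coe_fn_mk]; ring)

/-- global bound on payoffs -/
lemma pay_abs_le {u : K × C × D → ℝ} {g : K → I → J → ℝ} {σ : C → I → ℝ} {τ : D → J → ℝ}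
    (hg : Bounded1 g) (hσ : IsKernel σ) (hτ : IsKernel τ) :
    |pay u g σ τ| ≤ ∑ s : K × C × D, |u s| := by
  have hW : ∀ c i, |∑ k, ∑ d, ∑ j, u (k, c, d) * τ d j * g k i j|
      ≤ ∑ k, ∑ d, |u (k, c, d)| := by
    intro c i
    calc |∑ k, ∑ d, ∑ j, u (k, c, d) * τ d j * g k i j|
        ≤ ∑ k, |∑ d, ∑ j, u (k, c, d) * τ d j * g k i j| := Finset.abs_sum_le_sum_abs _ _
      _ ≤ ∑ k, ∑ d, |∑ j, u (k, c, d) * τ d j * g k i j| :=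
          Finset.sum_le_sum fun k _ => Finset.abs_sum_le_sum_abs _ _
      _ ≤ ∑ k, ∑ d, |u (k, c, d)| := by
          refine Finset.sum_le_sum fun k _ => Finset.sum_le_sum fun d _ => ?_
          calc |∑ j, u (k, c, d) * τ d j * g k i j|
              ≤ ∑ j, |u (k, c, d) * τ d j * g k i j| := Finset.abs_sum_le_sum_abs _ _
            _ ≤ ∑ j, |u (k, c, d)| * τ d j := by
                refine Finset.sum_le_sum fun j _ => ?_
                rw [abs_mul, abs_mul, abs_of_nonneg ((hτ d).1 j)]
                calc |u (k, c, d)| * τ d j * |g k i j| ≤ |u (k, c, d)| * τ d j * 1 :=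
                      mul_le_mul_of_nonneg_left (hg k i j)
                        (mul_nonneg (abs_nonneg _) ((hτ d).1 j))
                  _ = |u (k, c, d)| * τ d j := mul_one _
            _ = |u (k, c, d)| := by rw [← Finset.mul_sum, (hτ d).2, mul_one]
  calc |pay u g σ τ|
      = |∑ c, ∑ i, σ c i * (∑ k, ∑ d, ∑ j, u (k, c, d) * τ d j * g k i j)| := by rw [payB]
    _ ≤ ∑ c, |∑ i, σ c i * (∑ k, ∑ d, ∑ j, u (k, c, d) * τ d j * g k i j)| :=
        Finset.abs_sum_le_sum_abs _ _
    _ ≤ ∑ c, ∑ k, ∑ d, |u (k, c, d)| :=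
        Finset.sum_le_sum fun c _ => abs_sum_mul_le (hσ c).1 (hσ c).2 (hW c)
    _ = ∑ s : K × C × D, |u s| := by
        rw [Finset.sum_comm]
        simp [Fintype.sum_prod_type]

end GPAux

set_option linter.unusedSectionVars false
section GVAux

variable {K C D I J : Type*} [Fintype K] [Fintype C] [Fintype D] [Fintype I] [Fintype J]
  [Nonempty I] [Nonempty J]

lemma Tset_nonempty (u : K × C × D → ℝ) (g : K → I → J → ℝ) (σ : C → I → ℝ) :
    {y : ℝ | ∃ τ : D → J → ℝ, IsKernel τ ∧ y = pay u g σ τ}.Nonempty :=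
  ⟨_, pureK (fun _ => Classical.arbitrary J), isKernel_pureK _, rfl⟩

lemma Tset_bddBelow {u : K × C × D → ℝ} {g : K → I → J → ℝ} {σ : C → I → ℝ}
    (hg : Bounded1 g) (hσ : IsKernel σ) :
    BddBelow {y : ℝ | ∃ τ : D → J → ℝ, IsKernel τ ∧ y = pay u g σ τ} := by
  refine ⟨-∑ s : K × C × D, |u s|, ?_⟩
  rintro y ⟨τ, hτ, rfl⟩
  have := (abs_le.mp (pay_abs_le (u := u) hg hσ hτ)).1
  linarith

lemma sInf_le_pay {u : K × C × D → ℝ} {g : K → I → J → ℝ} {σ : C → I → ℝ} {τ : D → J → ℝ}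
    (hg : Bounded1 g) (hσ : IsKernel σ) (hτ : IsKernel τ) :
    sInf {y : ℝ | ∃ τ : D → J → ℝ, IsKernel τ ∧ y = pay u g σ τ} ≤ pay u g σ τ :=
  csInf_le (Tset_bddBelow hg hσ) ⟨τ, hτ, rfl⟩

lemma le_sInf_pay {u : K × C × D → ℝ} {g : K → I → J → ℝ} {σ : C → I → ℝ} {b : ℝ}
    (h : ∀ τ : D → J → ℝ, IsKernel τ → b ≤ pay u g σ τ) :
    b ≤ sInf {y : ℝ | ∃ τ : D → J → ℝ, IsKernel τ ∧ y = pay u g σ τ} := by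
  refine le_csInf (Tset_nonempty u g σ) ?_
  rintro y ⟨τ, hτ, rfl⟩
  exact h τ hτ

lemma le_gameVal {u : K × C × D → ℝ} {g : K → I → J → ℝ} {σ : C → I → ℝ}
    (hg : Bounded1 g) (hσ : IsKernel σ) :
    sInf {y : ℝ | ∃ τ : D → J → ℝ, IsKernel τ ∧ y = pay u g σ τ} ≤ gameVal u g := by
  refine le_csSup ⟨∑ s : K × C × D, |u s|, ?_⟩ ⟨σ, hσ, rfl⟩
  rintro x ⟨σ', hσ', rfl⟩
  refine le_trans (sInf_le_pay hg hσ' (isKernel_pureK (fun _ => Classical.arbitrary J))) ?_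
  exact (abs_le.mp (pay_abs_le hg hσ' (isKernel_pureK _))).2

lemma gameVal_le {u : K × C × D → ℝ} {g : K → I → J → ℝ} {b : ℝ}
    (h : ∀ σ : C → I → ℝ, IsKernel σ →
      sInf {y : ℝ | ∃ τ : D → J → ℝ, IsKernel τ ∧ y = pay u g σ τ} ≤ b) :
    gameVal u g ≤ b := by
  refine csSup_le ⟨_, pureK (fun _ => Classical.arbitrary I), isKernel_pureK _, rfl⟩ ?_
  rintro x ⟨σ, hσ, rfl⟩
  exact h σ hσ

lemma gameVal_garbleL_le {u : K × C × D → ℝ} {g : K → I → J → ℝ} {q : C → C → ℝ}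
    (hg : Bounded1 g) (hq : IsKernel q) :
    gameVal (garbleL q u) g ≤ gameVal u g := by
  refine gameVal_le fun σ' hσ' => ?_
  have hset : {y : ℝ | ∃ τ : D → J → ℝ, IsKernel τ ∧ y = pay (garbleL q u) g σ' τ}
      = {y : ℝ | ∃ τ : D → J → ℝ, IsKernel τ ∧
          y = pay u g (fun c i => ∑ c', q c c' * σ' c' i) τ} := by
    simp only [pay_garbleL]
  rw [hset]
  exact le_gameVal hg (isKernel_comp hq hσ')

lemma gameVal_le_garbleR {v : K × C × D → ℝ} {g : K → I → J → ℝ} {q : D → D → ℝ}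
    (hg : Bounded1 g) (hq : IsKernel q) :
    gameVal v g ≤ gameVal (garbleR q v) g := by
  refine gameVal_le fun σ hσ => ?_
  refine le_trans ?_ (le_gameVal hg hσ)
  refine le_csInf (Tset_nonempty _ g σ) ?_
  rintro y ⟨τ', hτ', rfl⟩
  rw [pay_garbleR]
  exact sInf_le_pay hg hσ (isKernel_comp hq hτ')

lemma gameVal_lip {w w' : K × C × D → ℝ} {g : K → I → J → ℝ} (hg : Bounded1 g) :
    gameVal w g ≤ gameVal w' g + l1 w w' := by
  refine gameVal_le fun σ hσ => ?_
  have key : ∀ τ : D → J → ℝ, IsKernel τ → pay w g σ τ ≤ pay w' g σ τ + l1 w w' := by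
    intro τ hτ
    have h1 := (abs_le.mp (pay_abs_le (u := fun s => w s - w' s) hg hσ hτ)).2
    rw [pay_sub] at h1
    have h2 : ∑ s : K × C × D, |(fun s => w s - w' s) s| = l1 w w' := by
      simp [l1]
    rw [h2] at h1
    linarith
  have h3 : sInf {y : ℝ | ∃ τ : D → J → ℝ, IsKernel τ ∧ y = pay w g σ τ} - l1 w w'
      ≤ sInf {y : ℝ | ∃ τ : D → J → ℝ, IsKernel τ ∧ y = pay w' g σ τ} := by
    refine le_csInf (Tset_nonempty _ g σ) ?_
    rintro y ⟨τ, hτ, rfl⟩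
    have := sInf_le_pay (u := w) hg hσ hτ
    have := key τ hτ
    linarith
  have h4 := le_gameVal (u := w') hg hσ
  linarith

lemma gameVal_le_pure2 {u : K × C × D → ℝ} {g : K → I → J → ℝ} (hg : Bounded1 g)
    (f : D → J) (B : C → ℝ)
    (hB : ∀ c i, (∑ k, ∑ d, u (k, c, d) * g k i (f d)) ≤ B c) :
    gameVal u g ≤ ∑ c, B c := by
  classical
  refine gameVal_le fun σ hσ => ?_
  refine le_trans (sInf_le_pay hg hσ (isKernel_pureK f)) ?_
  rw [payB]
  refine Finset.sum_le_sum fun c _ =>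
    sum_mul_le_of_le (fun i => (hσ c).1 i) (hσ c).2 (fun i => ?_)
  have : ∑ k, ∑ d, ∑ j, u (k, c, d) * pureK f d j * g k i j
      = ∑ k, ∑ d, u (k, c, d) * g k i (f d) := by
    simp [pureK, mul_ite, ite_mul, Finset.sum_ite_eq']
  rw [this]
  exact hB c i

lemma le_gameVal_pure1 {v : K × C × D → ℝ} {g : K → I → J → ℝ} (hg : Bounded1 g)
    (e : C → I) (B : D → ℝ)
    (hB : ∀ d j, B d ≤ ∑ k, ∑ c, v (k, c, d) * g k (e c) j) :
    ∑ d, B d ≤ gameVal v g := by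
  classical
  refine le_trans ?_ (le_gameVal hg (isKernel_pureK e))
  refine le_sInf_pay fun τ hτ => ?_
  rw [payA]
  refine Finset.sum_le_sum fun d _ =>
    le_sum_mul_of_le (fun j => (hτ d).1 j) (hτ d).2 (fun j => ?_)
  have : ∑ k, ∑ c, ∑ i, v (k, c, d) * pureK e c i * g k i j
      = ∑ k, ∑ c, v (k, c, d) * g k (e c) j := by
    simp [pureK, mul_ite, ite_mul, Finset.sum_ite_eq']
  rw [this]
  exact hB d j

end GVAux

section HB

variable {K C D : Type*} [Fintype K] [Fintype C] [Fintype D]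

lemma isKernel_convex {α β : Type*} [Fintype β] {q q' : α → β → ℝ} {a b : ℝ}
    (hq : IsKernel q) (hq' : IsKernel q') (ha : 0 ≤ a) (hb : 0 ≤ b) (hab : a + b = 1) :
    IsKernel (fun x y => a * q x y + b * q' x y) := by
  intro x
  refine ⟨fun y => add_nonneg (mul_nonneg ha ((hq x).1 y)) (mul_nonneg hb ((hq' x).1 y)), ?_⟩
  rw [Finset.sum_add_distrib, ← Finset.mul_sum, ← Finset.mul_sum, (hq x).2, (hq' x).2]
  simpa using hab

lemma garbleL_combo {C' : Type*} {q q' : C → C' → ℝ} {a b : ℝ} (u : K × C × D → ℝ)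
    (x : K × C' × D) :
    garbleL (fun c c' => a * q c c' + b * q' c c') u x
      = a * garbleL q u x + b * garbleL q' u x := by
  simp [garbleL, mul_add, Finset.sum_add_distrib, Finset.mul_sum, mul_left_comm]

lemma garbleR_combo {D' : Type*} {q q' : D → D' → ℝ} {a b : ℝ} (v : K × C × D → ℝ)
    (x : K × C × D') :
    garbleR (fun d d' => a * q d d' + b * q' d d') v x
      = a * garbleR q v x + b * garbleR q' v x := by
  simp [garbleR, mul_add, Finset.sum_add_distrib, Finset.mul_sum, mul_left_comm]

lemma exists_phi [Nonempty (K × C × D)] (u v : K × C × D → ℝ) {α : ℝ}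
    (hα : ∀ (q₁ : C → C → ℝ) (q₂ : D → D → ℝ), IsKernel q₁ → IsKernel q₂ →
      α ≤ l1 (garbleL q₁ u) (garbleR q₂ v)) :
    ∃ φ : K × C × D → ℝ, (∀ s, |φ s| ≤ 1) ∧
      ∀ (q₁ : C → C → ℝ) (q₂ : D → D → ℝ), IsKernel q₁ → IsKernel q₂ →
        α ≤ ∑ s : K × C × D, φ s * (garbleL q₁ u s - garbleR q₂ v s) := by
  classical
  by_cases hpos : 0 < α
  case neg =>
    refine ⟨0, by simp, fun q₁ q₂ h1 h2 => ?_⟩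
    simpa using le_of_not_gt hpos
  case pos =>
  set W : Set ((K × C × D) → ℝ) :=
    {w | ∃ q₁ q₂, IsKernel q₁ ∧ IsKernel q₂ ∧
      w = fun s => garbleL q₁ u s - garbleR q₂ v s} with hWdef
  set B : Set ((K × C × D) → ℝ) := {z | ∑ s, |z s| < α} with hBdef
  have hWα : ∀ w ∈ W, α ≤ ∑ s, |w s| := by
    rintro w ⟨q₁, q₂, h1, h2, rfl⟩
    have := hα q₁ q₂ h1 h2
    simpa [l1] using this
  have hWconv : Convex ℝ W := by
    rintro w ⟨q₁, q₂, h1, h2, rfl⟩ w' ⟨q₁', q₂', h1', h2', rfl⟩ a b ha hb hab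
    refine ⟨fun c c' => a * q₁ c c' + b * q₁' c c', fun d d' => a * q₂ d d' + b * q₂' d d',
      isKernel_convex h1 h1' ha hb hab, isKernel_convex h2 h2' ha hb hab, ?_⟩
    funext s
    simp only [Pi.add_apply, Pi.smul_apply, smul_eq_mul, garbleL_combo, garbleR_combo]
    ring
  have hn1cont : Continuous (fun z : (K × C × D) → ℝ => ∑ s, |z s|) :=
    continuous_finset_sum _ fun s _ => (continuous_apply s).abs
  have hBopen : IsOpen B := by
    have : B = (fun z : (K × C × D) → ℝ => ∑ s, |z s|) ⁻¹' Set.Iio α := rfl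
    rw [this]
    exact isOpen_Iio.preimage hn1cont
  have hBconv : Convex ℝ B := by
    rintro z hz z' hz' a b ha hb hab
    have : ∑ s, |(a • z + b • z') s| ≤ a * (∑ s, |z s|) + b * (∑ s, |z' s|) := by
      rw [Finset.mul_sum, Finset.mul_sum, ← Finset.sum_add_distrib]
      refine Finset.sum_le_sum fun s _ => ?_
      simp only [Pi.add_apply, Pi.smul_apply, smul_eq_mul]
      calc |a * z s + b * z' s| ≤ |a * z s| + |b * z' s| := abs_add_le _ _
        _ = a * |z s| + b * |z' s| := by rw [abs_mul, abs_mul, abs_of_nonneg ha, abs_of_nonneg hb]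
    have hz1 : ∑ s, |z s| < α := hz
    have hz2 : ∑ s, |z' s| < α := hz'
    have : ∑ s, |(a • z + b • z') s| < α := by
      rcases eq_or_lt_of_le ha with ha0 | ha0
      · calc ∑ s, |(a • z + b • z') s| ≤ a * (∑ s, |z s|) + b * (∑ s, |z' s|) := this
          _ < α := by
              have hb1 : b = 1 := by rw [← ha0] at hab; linarith
              rw [← ha0, hb1]
              simpa using hz2
      · calc ∑ s, |(a • z + b • z') s| ≤ a * (∑ s, |z s|) + b * (∑ s, |z' s|) := this
          _ < a * α + b * α := by
              rcases eq_or_lt_of_le hb with hb0 | hb0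
              · rw [← hb0] at hab ⊢
                simp only [zero_mul, add_zero] at *
                exact (mul_lt_mul_iff_right₀ ha0).mpr hz1
              · exact add_lt_add ((mul_lt_mul_iff_right₀ ha0).mpr hz1) ((mul_lt_mul_iff_right₀ hb0).mpr hz2)
          _ = α := by rw [← add_mul, hab, one_mul]
    exact this
  have hdisj : Disjoint B W := by
    rw [Set.disjoint_left]
    intro z hz hzW
    exact absurd (hWα z hzW) (not_le.mpr hz)
  obtain ⟨f, t, hfB, hfW⟩ := geometric_hahn_banach_open hBconv hBopen hWconv hdisj
  have h0B : (0 : (K × C × D) → ℝ) ∈ B := by simpa [hBdef] using hpos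
  have ht0 : 0 < t := by simpa using hfB 0 h0B
  set c : K × C × D → ℝ := fun s => f (fun j => if s = j then (1:ℝ) else 0) with hcdef
  have crep : ∀ z : (K × C × D) → ℝ, f z = ∑ s, z s * c s := by
    intro z
    conv_lhs => rw [pi_eq_sum_univ z]
    rw [map_sum]
    exact Finset.sum_congr rfl fun s _ => by rw [map_smul, smul_eq_mul]
  set M : ℝ := Finset.univ.sup' Finset.univ_nonempty (fun s : K × C × D => |c s|) with hMdef
  have hM_ub : ∀ s, |c s| ≤ M := fun s => Finset.le_sup' (fun s : K × C × D => |c s|) (Finset.mem_univ s)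
  have hkey : ∀ s₀ : K × C × D, α * |c s₀| ≤ t := by
    intro s₀
    rcases eq_or_lt_of_le (abs_nonneg (c s₀)) with h0 | h0
    · rw [← h0, mul_zero]; exact ht0.le
    · by_contra hlt
      push_neg at hlt
      set r : ℝ := (t / |c s₀| + α) / 2 with hrdef
      have hr1 : r < α := by
        have : t / |c s₀| < α := (div_lt_iff₀ h0).mpr (by linarith [hlt])
        rw [hrdef]; linarith
      have hr0 : 0 < r := by
        have : 0 < t / |c s₀| := div_pos ht0 h0
        rw [hrdef]; linarith [hpos]
      have hr2 : t < r * |c s₀| := by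
        have h' : t / |c s₀| < r := by
          have : t / |c s₀| < α := (div_lt_iff₀ h0).mpr (by linarith [hlt])
          rw [hrdef]; linarith
        calc t = t / |c s₀| * |c s₀| := by field_simp
          _ < r * |c s₀| := by exact (mul_lt_mul_iff_left₀ h0).mpr h'
      set sgn : ℝ := if c s₀ < 0 then -1 else 1 with hsgndef
      have hsgn : sgn * c s₀ = |c s₀| := by
        rw [hsgndef]
        rcases lt_or_ge (c s₀) 0 with h | h
        · simp [h, abs_of_neg h]
        · simp [not_lt.mpr h, abs_of_nonneg h]
      set z : (K × C × D) → ℝ := (r * sgn) • (fun j => if s₀ = j then (1:ℝ) else 0) with hzdef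
      have hzB : z ∈ B := by
        have : ∑ s, |z s| = r := by
          rw [hzdef]
          have habs : |r * sgn| = r := by
            rw [abs_mul, abs_of_pos hr0, hsgndef]
            rcases lt_or_ge (c s₀) 0 with h | h
            · simp [h]
            · simp [not_lt.mpr h]
          simp only [Pi.smul_apply, smul_eq_mul, mul_ite, mul_one, mul_zero, apply_ite abs,
            abs_zero, Finset.sum_ite_eq, Finset.mem_univ, if_true]
          exact habs
        show ∑ s, |z s| < α
        rw [this]; exact hr1
      have hfz : f z = r * |c s₀| := by
        rw [hzdef, map_smul, smul_eq_mul]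
        have hcc : f (fun j => if s₀ = j then (1:ℝ) else 0) = c s₀ := rfl
        rw [hcc, mul_assoc, hsgn]
      have := hfB z hzB
      rw [hfz] at this
      linarith
  have hMα : α * M ≤ t := by
    obtain ⟨s₀, _, hs₀⟩ := Finset.exists_mem_eq_sup' Finset.univ_nonempty
      (fun s : K × C × D => |c s|)
    rw [hMdef, hs₀]
    exact hkey s₀
  have hW0 : (fun s => garbleL (pureK id) u s - garbleR (pureK id) v s) ∈ W :=
    ⟨pureK id, pureK id, isKernel_pureK id, isKernel_pureK id, rfl⟩
  have hMpos : 0 < M := by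
    by_contra hM
    push_neg at hM
    have hc0 : ∀ s, c s = 0 := fun s =>
      abs_eq_zero.mp (le_antisymm ((hM_ub s).trans hM) (abs_nonneg _))
    have := hfW _ hW0
    rw [crep] at this
    simp only [hc0, mul_zero, Finset.sum_const_zero] at this
    linarith
  refine ⟨fun s => c s / M, fun s => ?_, ?_⟩
  · rw [abs_div, abs_of_pos hMpos]
    exact (div_le_one hMpos).mpr (hM_ub s)
  · intro q₁ q₂ h1 h2
    have hw : (fun s => garbleL q₁ u s - garbleR q₂ v s) ∈ W := ⟨q₁, q₂, h1, h2, rfl⟩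
    have h3 := hfW _ hw
    rw [crep] at h3
    have h4 : ∑ s : K × C × D, c s / M * (garbleL q₁ u s - garbleR q₂ v s)
        = (∑ s : K × C × D, (garbleL q₁ u s - garbleR q₂ v s) * c s) / M := by
      rw [Finset.sum_div]
      exact Finset.sum_congr rfl fun s _ => by ring
    rw [h4, le_div_iff₀ hMpos]
    calc α * M ≤ t := hMα
      _ ≤ _ := h3
  

end HB

section MinG

variable {K C D : Type*} [Fintype K] [Fintype C] [Fintype D]

lemma exists_min_garble (u v : K × C × D → ℝ) :
    ∃ (q₁ : C → C → ℝ) (q₂ : D → D → ℝ), IsKernel q₁ ∧ IsKernel q₂ ∧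
      ∀ (q₁' : C → C → ℝ) (q₂' : D → D → ℝ), IsKernel q₁' → IsKernel q₂' →
        l1 (garbleL q₁ u) (garbleR q₂ v) ≤ l1 (garbleL q₁' u) (garbleR q₂' v) := by
  classical
  set Q : Set ((C → C → ℝ) × (D → D → ℝ)) := {q | IsKernel q.1 ∧ IsKernel q.2} with hQdef
  have hK1 : IsCompact {q : C → C → ℝ | IsKernel q} := by
    have h : {q : C → C → ℝ | IsKernel q} = Set.univ.pi (fun _ : C => stdSimplex ℝ C) := by
      ext q
      simp [IsKernel, IsDist, stdSimplex, Set.mem_pi]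
    rw [h]
    exact isCompact_univ_pi fun _ => isCompact_stdSimplex _ _
  have hK2 : IsCompact {q : D → D → ℝ | IsKernel q} := by
    have h : {q : D → D → ℝ | IsKernel q} = Set.univ.pi (fun _ : D => stdSimplex ℝ D) := by
      ext q
      simp [IsKernel, IsDist, stdSimplex, Set.mem_pi]
    rw [h]
    exact isCompact_univ_pi fun _ => isCompact_stdSimplex _ _
  have hQ : IsCompact Q := by
    have h : Q = {q : C → C → ℝ | IsKernel q} ×ˢ {q : D → D → ℝ | IsKernel q} := by
      ext q; simp [hQdef, Set.mem_prod]
    rw [h]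
    exact hK1.prod hK2
  have hcont : Continuous
      (fun q : (C → C → ℝ) × (D → D → ℝ) => l1 (garbleL q.1 u) (garbleR q.2 v)) := by
    unfold l1 garbleL garbleR
    refine continuous_finset_sum _ fun s _ => Continuous.abs (Continuous.sub ?_ ?_)
    · refine continuous_finset_sum _ fun c _ => Continuous.mul continuous_const ?_
      exact (continuous_apply _).comp ((continuous_apply c).comp continuous_fst)
    · refine continuous_finset_sum _ fun d _ => Continuous.mul continuous_const ?_
      exact (continuous_apply _).comp ((continuous_apply d).comp continuous_snd)
  obtain ⟨q, hqQ, hqmin⟩ := hQ.exists_isMinOn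
    ⟨(pureK id, pureK id), isKernel_pureK id, isKernel_pureK id⟩ hcont.continuousOn
  exact ⟨q.1, q.2, hqQ.1, hqQ.2, fun q₁' q₂' h1 h2 =>
    (isMinOn_iff.mp hqmin) (q₁', q₂') ⟨h1, h2⟩⟩

end MinG


theorem stmt1 {K C D : Type*} [Fintype K] [Fintype C] [Fintype D]
    (L : ℕ) (hL : 1 ≤ L) (hC : Fintype.card C ≤ L) (hD : Fintype.card D ≤ L)
    (u v : K × C × D → ℝ) (hu : IsDist u) (hv : IsDist v) :
    ∃ (q₁ : C → C → ℝ) (q₂ : D → D → ℝ), IsKernel q₁ ∧ IsKernel q₂ ∧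
      (∀ (q₁' : C → C → ℝ) (q₂' : D → D → ℝ), IsKernel q₁' → IsKernel q₂' →
        l1 (garbleL q₁ u) (garbleR q₂ v) ≤ l1 (garbleL q₁' u) (garbleR q₂' v)) ∧
      IsLUB {x : ℝ | ∃ m n : ℕ, m + 1 ≤ L ∧ n + 1 ≤ L ∧
          ∃ g : K → Fin (m + 1) → Fin (n + 1) → ℝ, Bounded1 g ∧
            x = gameVal v g - gameVal u g}
        (l1 (garbleL q₁ u) (garbleR q₂ v)) := by
  classical
  have hne : Nonempty (K × C × D) := by
    by_contra h
    rw [not_nonempty_iff] at h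
    have h2 := hu.2
    rw [Finset.univ_eq_empty, Finset.sum_empty] at h2
    norm_num at h2
  have hneC : Nonempty C := ⟨hne.some.2.1⟩
  have hneD : Nonempty D := ⟨hne.some.2.2⟩
  obtain ⟨q₁, q₂, hk1, hk2, hmin⟩ := exists_min_garble u v
  set α := l1 (garbleL q₁ u) (garbleR q₂ v) with hαdef
  refine ⟨q₁, q₂, hk1, hk2, hmin, ?_, ?_⟩
  · -- α is an upper bound
    rintro x ⟨m, n, hm, hn, g, hg, rfl⟩
    have h1 := gameVal_garbleL_le (u := u) (g := g) hg hk1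
    have h2 := gameVal_le_garbleR (v := v) (g := g) hg hk2
    have h3 := gameVal_lip (w := garbleR q₂ v) (w' := garbleL q₁ u) (g := g) hg
    have h4 : l1 (garbleR q₂ v) (garbleL q₁ u) = α := by
      rw [hαdef]
      unfold l1
      exact Finset.sum_congr rfl fun s _ => abs_sub_comm _ _
    rw [h4] at h3
    linarith
  · -- α is the least upper bound : exhibit α as an element of the set
    intro b hb
    -- construct the optimal game
    obtain ⟨φ, hφ1, hφ2⟩ := exists_phi u v hmin
    set m := Fintype.card C - 1 with hmdef
    have hCcard : Fintype.card C = m + 1 := (Nat.succ_pred_eq_of_pos Fintype.card_pos).symm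
    set n := Fintype.card D - 1 with hndef
    have hDcard : Fintype.card D = n + 1 := (Nat.succ_pred_eq_of_pos Fintype.card_pos).symm
    set eC : C ≃ Fin (m + 1) := (Fintype.equivFin C).trans (finCongr hCcard) with heC
    set eD : D ≃ Fin (n + 1) := (Fintype.equivFin D).trans (finCongr hDcard) with heD
    set g : K → Fin (m + 1) → Fin (n + 1) → ℝ :=
      fun k i j => -φ (k, eC.symm i, eD.symm j) with hgdef
    have hg : Bounded1 g := fun k i j => by rw [hgdef]; simpa using hφ1 _
    -- argmin / argmax choices
    have hcs : ∀ c : C, ∃ c' : C, ∀ c'' : C,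
        (∑ k, ∑ d, u (k, c, d) * φ (k, c', d)) ≤ ∑ k, ∑ d, u (k, c, d) * φ (k, c'', d) := by
      intro c
      obtain ⟨b', _, hb'⟩ := Finset.exists_min_image Finset.univ
        (fun c' => ∑ k, ∑ d, u (k, c, d) * φ (k, c', d)) ⟨Classical.arbitrary C, Finset.mem_univ _⟩
      exact ⟨b', fun c'' => hb' c'' (Finset.mem_univ _)⟩
    choose cstar hcstar using hcs
    have hds : ∀ d : D, ∃ d' : D, ∀ d'' : D,
        (∑ k, ∑ c, v (k, c, d) * φ (k, c, d'')) ≤ ∑ k, ∑ c, v (k, c, d) * φ (k, c, d') := by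
      intro d
      obtain ⟨b', _, hb'⟩ := Finset.exists_max_image Finset.univ
        (fun d' => ∑ k, ∑ c, v (k, c, d) * φ (k, c, d')) ⟨Classical.arbitrary D, Finset.mem_univ _⟩
      exact ⟨b', fun d'' => hb' d'' (Finset.mem_univ _)⟩
    choose dstar hdstar using hds
    -- value bounds
    have hval_u : gameVal u g ≤ ∑ c, -(∑ k, ∑ d, u (k, c, d) * φ (k, cstar c, d)) := by
      refine gameVal_le_pure2 hg (fun d => eD d) _ fun c i => ?_
      have he : ∑ k, ∑ d, u (k, c, d) * g k i (eD d)
          = -(∑ k, ∑ d, u (k, c, d) * φ (k, eC.symm i, d)) := by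
        rw [hgdef]
        simp [mul_neg, Finset.sum_neg_distrib]
      rw [he]
      exact neg_le_neg (hcstar c (eC.symm i))
    have hval_v : ∑ d, -(∑ k, ∑ c, v (k, c, d) * φ (k, c, dstar d)) ≤ gameVal v g := by
      refine le_gameVal_pure1 hg (fun c => eC c) _ fun d j => ?_
      have he : ∑ k, ∑ c, v (k, c, d) * g k (eC c) j
          = -(∑ k, ∑ c, v (k, c, d) * φ (k, c, eD.symm j)) := by
        rw [hgdef]
        simp [mul_neg, Finset.sum_neg_distrib]
      rw [he]
      exact neg_le_neg (hdstar d (eD.symm j))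
    -- the inner product identity
    have h5 := hφ2 (pureK cstar) (pureK dstar) (isKernel_pureK _) (isKernel_pureK _)
    have e1 : ∑ s : K × C × D, φ s * garbleL (pureK cstar) u s
        = ∑ c, ∑ k, ∑ d, u (k, c, d) * φ (k, cstar c, d) := by
      rw [ip_garbleL]
      refine Finset.sum_congr rfl fun c _ => ?_
      simp [pureK, mul_ite, Finset.sum_ite_eq']
    have e2 : ∑ s : K × C × D, φ s * garbleR (pureK dstar) v s
        = ∑ d, ∑ k, ∑ c, v (k, c, d) * φ (k, c, dstar d) := by
      rw [ip_garbleR]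
      refine Finset.sum_congr rfl fun d _ => ?_
      simp [pureK, mul_ite, Finset.sum_ite_eq']
    have e3 : ∑ s : K × C × D, φ s * (garbleL (pureK cstar) u s - garbleR (pureK dstar) v s)
        = (∑ c, ∑ k, ∑ d, u (k, c, d) * φ (k, cstar c, d))
          - ∑ d, ∑ k, ∑ c, v (k, c, d) * φ (k, c, dstar d) := by
      rw [← e1, ← e2, ← Finset.sum_sub_distrib]
      exact Finset.sum_congr rfl fun s _ => by ring
    rw [e3] at h5
    have hsA : ∑ c, -(∑ k, ∑ d, u (k, c, d) * φ (k, cstar c, d))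
        = -(∑ c, ∑ k, ∑ d, u (k, c, d) * φ (k, cstar c, d)) := by
      rw [Finset.sum_neg_distrib]
    have hsB : ∑ d, -(∑ k, ∑ c, v (k, c, d) * φ (k, c, dstar d))
        = -(∑ d, ∑ k, ∑ c, v (k, c, d) * φ (k, c, dstar d)) := by
      rw [Finset.sum_neg_distrib]
    have hkey : α ≤ gameVal v g - gameVal u g := by
      rw [hsA] at hval_u
      rw [hsB] at hval_v
      linarith
    -- membership of the value difference
    have hm1 : m + 1 ≤ L := hCcard ▸ hC
    have hn1 : n + 1 ≤ L := hDcard ▸ hD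
    have hmem : gameVal v g - gameVal u g ∈ {x : ℝ | ∃ m n : ℕ, m + 1 ≤ L ∧ n + 1 ≤ L ∧
        ∃ g : K → Fin (m + 1) → Fin (n + 1) → ℝ, Bounded1 g ∧
          x = gameVal v g - gameVal u g} := ⟨m, n, hm1, hn1, g, hg, rfl⟩
    have := hb hmem
    linarith
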